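/- Let p be an odd prime and r ≥ 1. If a sequence S = (x_1,…,x_k) in Z_{p^r} has at least two terms that are units of Z_{p^r} (i.e., coprime to p), then S is a U(p^r)-weighted zero-sum sequence; that is, there exist units a_1,…,a_k of Z_{p^r} with ∑_{i=1}^k a_i x_i = 0. -/

import Mathlib

open Classical in
lemma my_unit_iff (p r : ℕ) (hp : p.Prime) (hr : 1 ≤ r) (x : ZMod (p ^ r)) :
    IsUnit x ↔ (ZMod.castHom (dvd_pow_self p (by omega : r ≠ 0)) (ZMod p)) x ≠ 0 := by
  haveI : Fact p.Prime := ⟨hp⟩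
  haveI : NeZero (p ^ r) := ⟨pow_ne_zero r hp.pos.ne'⟩
  conv_lhs => rw [← ZMod.natCast_rightInverse x]
  rw [ZMod.isUnit_iff_coprime]
  rw [show (ZMod.castHom (dvd_pow_self p (by omega : r ≠ 0)) (ZMod p)) x
      = ((x.val : ℕ) : ZMod p) by
    conv_lhs => rw [← ZMod.natCast_rightInverse x]
    simp [map_natCast]]
  rw [Ne, ZMod.natCast_eq_zero_iff]
  rw [Nat.coprime_pow_right_iff (by omega : 0 < r)]
  constructor
  · intro h hd
    exact hp.one_lt.ne' (Nat.eq_one_of_dvd_coprimes h hd dvd_rfl)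
  · intro h
    exact (Nat.coprime_comm.mpr ((hp.coprime_iff_not_dvd).mpr h))

lemma my_key (p r : ℕ) (hp : p.Prime) (hpodd : p ≠ 2) (hr : 1 ≤ r)
    (u v s : ZMod (p ^ r)) (hu : IsUnit u) (hv : IsUnit v) :
    ∃ a b : ZMod (p ^ r), IsUnit a ∧ IsUnit b ∧ a * u + b * v + s = 0 := by
  haveI : Fact p.Prime := ⟨hp⟩
  set φ := ZMod.castHom (dvd_pow_self p (by omega : r ≠ 0)) (ZMod p) with hφ
  have h2 : IsUnit (2 : ZMod (p ^ r)) := by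
    have hc : Nat.Coprime 2 p := Nat.coprime_two_left.mpr (hp.odd_of_ne_two hpodd)
    have := (ZMod.isUnit_iff_coprime 2 (p ^ r)).mpr (hc.pow_right r)
    exact_mod_cast this
  -- choose b ∈ {1, 2} so that (-s - b*v) is a unit
  have hvφ : φ v ≠ 0 := (my_unit_iff p r hp hr v).mp hv
  have key : IsUnit (-s - v) ∨ IsUnit (-s - 2 * v) := by
    by_contra hcon
    push_neg at hcon
    obtain ⟨k1, k2⟩ := hcon
    rw [my_unit_iff p r hp hr, not_ne_iff] at k1 k2
    apply hvφ
    have : φ (-s - v) - φ (-s - 2 * v) = 0 := by rw [k1, k2]; ring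
    simp only [map_sub, map_neg, map_mul, map_ofNat] at this
    rw [← this]; ring
  rcases key with hk | hk
  · obtain ⟨a0, ha0⟩ := hk
    refine ⟨(-s - v) * ↑hu.unit⁻¹, 1, ?_, isUnit_one, ?_⟩
    · exact (IsUnit.mul (⟨a0, ha0⟩) (Units.isUnit _))
    · have huu : (↑hu.unit⁻¹ : ZMod (p ^ r)) * u = 1 := by
        have h1 := hu.unit.inv_mul
        rwa [IsUnit.unit_spec] at h1
      calc (-s - v) * ↑hu.unit⁻¹ * u + 1 * v + s
          = (-s - v) * ((↑hu.unit⁻¹ : ZMod (p ^ r)) * u) + v + s := by ring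
        _ = 0 := by rw [huu]; ring
  · obtain ⟨a0, ha0⟩ := hk
    refine ⟨(-s - 2 * v) * ↑hu.unit⁻¹, 2, ?_, h2, ?_⟩
    · exact (IsUnit.mul (⟨a0, ha0⟩) (Units.isUnit _))
    · have huu : (↑hu.unit⁻¹ : ZMod (p ^ r)) * u = 1 := by
        have h1 := hu.unit.inv_mul
        rwa [IsUnit.unit_spec] at h1
      calc (-s - 2 * v) * ↑hu.unit⁻¹ * u + 2 * v + s
          = (-s - 2 * v) * ((↑hu.unit⁻¹ : ZMod (p ^ r)) * u) + 2 * v + s := by ring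
        _ = 0 := by rw [huu]; ring

open Classical in
lemma my_two_split {α : Type*} (P : α → Prop) (S : List α)
    (h : 2 ≤ S.countP fun x => decide (P x)) :
    ∃ (A B C : List α) (u v : α), S = A ++ u :: B ++ v :: C ∧ P u ∧ P v := by
  induction S with
  | nil => simp at h
  | cons x T ih =>
    by_cases hx : P x
    · rw [List.countP_cons, if_pos (decide_eq_true hx)] at h
      have h1 : 0 < T.countP fun x => decide (P x) := by omega
      rw [List.countP_pos_iff] at h1
      obtain ⟨u, hu, hPu⟩ := h1
      obtain ⟨B, C, rfl⟩ := List.append_of_mem hu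
      exact ⟨[], B, C, x, u, rfl, hx, of_decide_eq_true hPu⟩
    · rw [List.countP_cons, if_neg (by simp [hx])] at h
      obtain ⟨A, B, C, u, v, rfl, hu, hv⟩ := ih h
      exact ⟨x :: A, B, C, u, v, rfl, hu, hv⟩

lemma my_onesum {n : ℕ} (S : List (ZMod n)) :
    (List.zipWith (· * ·) (S.map fun _ => (1 : ZMod n)) S).sum = S.sum := by
  induction S with
  | nil => simp
  | cons x T ih =>
      rw [List.map_cons, List.zipWith_cons_cons, List.sum_cons, ih, one_mul, List.sum_cons]



open Classical in
/-- The number of terms of the sequence `S` satisfying the predicate `P`. -/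
noncomputable def pcount {α : Type*} (P : α → Prop) (S : List α) : ℕ :=
  S.countP fun x => decide (P x)

/-- `S` is an `A`-weighted zero-sum sequence in `ZMod n`: there are weights
`a i ∈ A` with `∑ a i * x i = 0`. -/
def IsWZSum {n : ℕ} (A : Set (ZMod n)) (S : List (ZMod n)) : Prop :=
  ∃ w : List (ZMod n), w.length = S.length ∧ (∀ a ∈ w, a ∈ A) ∧
    (List.zipWith (· * ·) w S).sum = 0

/-- `S` has an `A`-weighted zero-sum subsequence of length `t ≥ 1`. -/
def HasWZSS {n : ℕ} (A : Set (ZMod n)) (S : List (ZMod n)) (t : ℕ) : Prop :=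
  0 < t ∧ ∃ T : List (ZMod n), T.Sublist S ∧ T.length = t ∧ IsWZSum A T

/-- `S` has a nonempty `A`-weighted zero-sum subsequence. -/
def HasWZS {n : ℕ} (A : Set (ZMod n)) (S : List (ZMod n)) : Prop :=
  ∃ T : List (ZMod n), T.Sublist S ∧ T ≠ [] ∧ IsWZSum A T

/-- The `A`-weighted Davenport constant `D_A(n)`: the least `k > 0` such that every
sequence of length `k` in `ZMod n` has a nonempty `A`-weighted zero-sum subsequence. -/
noncomputable def DavC (n : ℕ) (A : Set (ZMod n)) : ℕ :=
  sInf {k | 0 < k ∧ ∀ S : List (ZMod n), S.length = k → HasWZS A S}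

/-- The `A`-weighted Gao constant `E_A(n)`: the least `k > 0` such that every
sequence of length `k` in `ZMod n` has an `A`-weighted zero-sum subsequence of length `n`. -/
noncomputable def GaoC (n : ℕ) (A : Set (ZMod n)) : ℕ :=
  sInf {k | 0 < k ∧ ∀ S : List (ZMod n), S.length = k → HasWZSS A S n}

/-- The set of units of `ZMod n`. -/
def U (n : ℕ) : Set (ZMod n) := {x | IsUnit x}

/-- An `A`-extremal sequence for the Gao constant: a sequence of length `E_A(n) - 1`
with no `A`-weighted zero-sum subsequence of length `n`. -/
def IsGaoExtremal (n : ℕ) (A : Set (ZMod n)) (S : List (ZMod n)) : Prop :=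
  S.length = GaoC n A - 1 ∧ ¬ HasWZSS A S n

/-- `S` and `T` are `A`-equivalent: there are a unit `c`, weights `a i ∈ A` and a
permutation matching the multiset of terms `c * y j` with the multiset `a i * x i`. -/
def AEquiv {n : ℕ} (A : Set (ZMod n)) (S T : List (ZMod n)) : Prop :=
  ∃ c : ZMod n, IsUnit c ∧ ∃ w : List (ZMod n), w.length = S.length ∧
    (∀ a ∈ w, a ∈ A) ∧ (T.map fun y => c * y).Perm (List.zipWith (· * ·) w S)

/-- If a sequence over `ZMod (p ^ r)`, `p` an odd prime, has at least two unit terms,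
then it is a `U(p^r)`-weighted zero-sum sequence. -/
theorem wzsum_of_two_units (p r : ℕ) (hp : p.Prime) (hpodd : p ≠ 2) (hr : 1 ≤ r)
    (S : List (ZMod (p ^ r)))
    (h2 : 2 ≤ pcount (fun x => IsUnit x) S) :
    IsWZSum (U (p ^ r)) S := by
  unfold pcount at h2
  obtain ⟨A, B, C, u, v, rfl, hu, hv⟩ := my_two_split (fun x => IsUnit x) S h2
  obtain ⟨a, b, ha, hb, hab⟩ :=
    my_key p r hp hpodd hr u v (A.sum + B.sum + C.sum) hu hv
  refine ⟨((A.map fun _ => 1) ++ (a :: B.map fun _ => 1)) ++ (b :: C.map fun _ => 1),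
    by simp, ?_, ?_⟩
  · intro x hx
    show IsUnit x
    rcases List.mem_append.mp hx with h1 | h1
    · rcases List.mem_append.mp h1 with h2 | h2
      · obtain ⟨_, _, rfl⟩ := List.mem_map.mp h2; exact isUnit_one
      · rcases List.mem_cons.mp h2 with rfl | h3
        · exact ha
        · obtain ⟨_, _, rfl⟩ := List.mem_map.mp h3; exact isUnit_one
    · rcases List.mem_cons.mp h1 with rfl | h3
      · exact hb
      · obtain ⟨_, _, rfl⟩ := List.mem_map.mp h3; exact isUnit_one
  · rw [List.zipWith_append (by simp),
      List.zipWith_append (by simp),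
      List.zipWith_cons_cons, List.zipWith_cons_cons,
      List.sum_append, List.sum_append, List.sum_cons, List.sum_cons,
      my_onesum, my_onesum, my_onesum]
    linear_combination hab
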